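/- Suppose M is a d-CFF(t,n), blocks B₁,…,Bₙ have hash values h₁,…,hₙ under an injective function h, tests are defined by T_i = h(concatenation of h_j over j with M_{i,j}=1), and a modified document B' with hashes h'₁,…,h'ₙ differs from B in a set D of at most d block indices (h'_j = h_j iff j ∉ D). If the concatenation-hash map is injective, then the set of failing tests F = { i : T_i ≠ T'_i } equals { i : ∃ j ∈ D, M_{i,j} = 1 }, and the CFF decoding applied to F recovers D exactly. -/

import Mathlib

/-- `M` is a `d`-cover-free family with `t` rows and `n` columns:
`n ≥ d+1` and for every set `C` of `d` column indices and column `c ∉ C`,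
some row has a `1` in column `c` and `0` in all columns of `C`. -/
def IsCFF (d t n : ℕ) (M : Fin t → Fin n → Bool) : Prop :=
  d + 1 ≤ n ∧ ∀ (C : Finset (Fin n)) (c : Fin n), C.card = d → c ∉ C →
    ∃ i : Fin t, M i c = true ∧ ∀ j ∈ C, M i j = false

theorem stmt_12 {d t n : ℕ} {α β : Type*} (M : Fin t → Fin n → Bool) (hM : IsCFF d t n M)
    (h h' : Fin n → α) (hh : Function.Injective h)
    (D : Finset (Fin n)) (hD : D.card ≤ d)
    (hdiff : ∀ j : Fin n, h' j = h j ↔ j ∉ D)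
    (g : (Fin n → Option α) → β) (hg : Function.Injective g)
    (T T' : Fin t → β)
    (hT : ∀ i, T i = g (fun j => if M i j = true then some (h j) else none))
    (hT' : ∀ i, T' i = g (fun j => if M i j = true then some (h' j) else none)) :
    {i : Fin t | T i ≠ T' i} = {i : Fin t | ∃ j ∈ D, M i j = true} ∧
    {j : Fin n | ∀ i : Fin t, i ∉ {i : Fin t | T i ≠ T' i} → M i j = false}
      = (↑D : Set (Fin n)) := by
  have key : ∀ i, T i ≠ T' i ↔ ∃ j ∈ D, M i j = true := by
    intro i
    constructor
    · intro hne
      by_contra hcon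
      push_neg at hcon
      apply hne
      rw [hT, hT']
      congr 1
      funext j
      by_cases hm : M i j = true
      · simp only [hm, if_true]
        have : j ∉ D := fun hj => by simpa [hm] using hcon j hj
        rw [(hdiff j).2 this]
      · simp [hm]
    · rintro ⟨j, hjD, hmj⟩ heq
      rw [hT, hT'] at heq
      have := congrFun (hg heq) j
      simp only [hmj, if_true, Option.some.injEq] at this
      exact ((hdiff j).1 this.symm) hjD
  constructor
  · ext i; simp only [Set.mem_setOf_eq]; exact key i
  · ext j
    simp only [Set.mem_setOf_eq, Finset.coe_mem, Finset.mem_coe]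
    constructor
    · intro hall
      by_contra hjD
      have hcard : d ≤ (Finset.univ.erase j).card := by
        have hn := hM.1
        have : (Finset.univ.erase j : Finset (Fin n)).card = n - 1 := by
          simp [Finset.card_erase_of_mem]
        omega
      obtain ⟨C, hDC, hCsub, hCcard⟩ := Finset.exists_subsuperset_card_eq
        (Finset.subset_erase.2 ⟨D.subset_univ, fun hc => hjD hc⟩) hD hcard
      obtain ⟨i, hic, hiz⟩ := hM.2 C j hCcard (fun hjC => (Finset.mem_erase.1 (hCsub hjC)).1 rfl)
      have hfine : T i = T' i := by
        by_contra hne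
        obtain ⟨j', hj'D, hmj'⟩ := (key i).1 hne
        exact absurd (hiz j' (hDC hj'D)) (by simp [hmj'])
      have := hall i (fun hc => hc hfine)
      simp [hic] at this
    · intro hjD i hi
      by_contra hm
      simp only [Bool.not_eq_false] at hm
      exact hi ((key i).2 ⟨j, hjD, hm⟩)
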